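/- Fix a prime p. Let R ⊆ S be a finite extension of noetherian commutative domains of characteristic p and T : S → R an R-linear map. Let 𝔞 ⊊ R be a radical ideal such that for every minimal prime 𝔭 of 𝔞 one has √(𝔭S) = { s ∈ S : T(s·x) ∈ 𝔭 for all x ∈ S }. Let e ≥ 1 and let φ ∈ C_{e,R} admit a T-transpose φ^⊤, and suppose φ(𝔞) ⊆ 𝔞. Then φ^⊤(√(𝔞S)) ⊆ √(𝔞S). -/

import Mathlib

/-- `p^e`-semilinear additive maps ("Cartier maps"):
`φ (a^{p^e} • x) = a • φ x`. -/
def IsCartierMap (p : ℕ) (A : Type*) [CommSemiring A] {X Y : Type*} [AddCommMonoid X]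
    [AddCommMonoid Y] [Module A X] [Module A Y] (e : ℕ) (φ : X →+ Y) : Prop :=
  ∀ (a : A) (x : X), φ (a ^ p ^ e • x) = a • φ x

/-- `ψ` is a `T`-transpose of `φ`: `T (ψ s * s') = φ (T (s * s'^{p^e}))`. -/
def IsTranspose (p : ℕ) {R S : Type*} [CommRing R] [CommRing S] [Algebra R S]
    (T : S →ₗ[R] R) (e : ℕ) (φ : R →+ R) (ψ : S →+ S) : Prop :=
  ∀ s s' : S, T (ψ s * s') = φ (T (s * s' ^ p ^ e))

lemma my_finite_minimalPrimes {R : Type*} [CommRing R] [IsNoetherianRing R] (I : Ideal R) :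
    I.minimalPrimes.Finite := by
  rw [Ideal.minimalPrimes_eq_comap]
  exact (minimalPrimes.finite_of_isNoetherianRing (R ⧸ I)).image _

/-- A Cartier map compatible with a radical ideal is compatible with its minimal primes. -/
lemma cartier_stab_minimalPrime (p : ℕ) {R : Type*} [CommRing R] [IsNoetherianRing R]
    (𝔞 : Ideal R) (h𝔞rad : 𝔞.radical = 𝔞) (e : ℕ) (φ : R →+ R)
    (hpe : 0 < p ^ e) (hφ : IsCartierMap p R e φ) (hstab : ∀ a ∈ 𝔞, φ a ∈ 𝔞)
    (𝔭 : Ideal R) (h𝔭 : 𝔭 ∈ 𝔞.minimalPrimes) : ∀ a ∈ 𝔭, φ a ∈ 𝔭 := by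
  have h𝔭pr : 𝔭.IsPrime := h𝔭.1.1
  have hfin := my_finite_minimalPrimes 𝔞
  classical
  set t : Finset (Ideal R) := hfin.toFinset.erase 𝔭 with ht
  -- intersection of the other minimal primes is not contained in 𝔭
  have hnotle : ¬ t.inf id ≤ 𝔭 := by
    intro hle
    obtain ⟨q, hq, hq'⟩ := (Ideal.IsPrime.inf_le' h𝔭pr).mp hle
    have hq𝔞 : q ∈ 𝔞.minimalPrimes := hfin.mem_toFinset.mp (Finset.mem_of_mem_erase hq)
    have : 𝔭 ≤ q := h𝔭.2 ⟨hq𝔞.1.1, hq𝔞.1.2⟩ hq'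
    exact (Finset.ne_of_mem_erase hq) (le_antisymm hq' this)
  obtain ⟨c, hc, hc𝔭⟩ := SetLike.not_le_iff_exists.mp hnotle
  intro a ha
  have hmem : c ^ p ^ e * a ∈ 𝔞 := by
    rw [← h𝔞rad, ← Ideal.sInf_minimalPrimes]
    refine (Ideal.mem_sInf).mpr fun {q} hq => ?_
    by_cases hqp : q = 𝔭
    · subst hqp; exact Ideal.mul_mem_left _ _ ha
    · have hct : q ∈ t := Finset.mem_erase.mpr ⟨hqp, hfin.mem_toFinset.mpr hq⟩
      have hcq : c ∈ q := (Finset.inf_le (f := id) hct : t.inf id ≤ q) hc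
      exact Ideal.mul_mem_right _ _ (q.pow_mem_of_mem hcq _ hpe)
  have hφmem : c * φ a ∈ 𝔞 := by
    have := hφ c a
    simp only [smul_eq_mul] at this
    rw [← this]; exact hstab _ hmem
  have h𝔞𝔭 : 𝔞 ≤ 𝔭 := h𝔭.1.2
  rcases h𝔭pr.mem_or_mem (h𝔞𝔭 hφmem) with h | h
  · exact absurd h hc𝔭
  · exact h

/-- If `√(𝔭S) = f^!𝔭 :_S T` for every minimal prime `𝔭` of a radical ideal `𝔞` compatible
with `φ`, then the transpose `φ^⊤` is compatible with `√(𝔞S)`. -/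
theorem transpose_compatible_radical
    (p : ℕ) (hp : p.Prime) (R S : Type*) [CommRing R] [CommRing S]
    [IsDomain R] [IsDomain S] [IsNoetherianRing R] [IsNoetherianRing S]
    [CharP R p] [CharP S p] [Algebra R S] [Module.Finite R S]
    (hinj : Function.Injective (algebraMap R S)) (T : S →ₗ[R] R)
    (𝔞 : Ideal R) (h𝔞ne : 𝔞 ≠ ⊤) (h𝔞rad : 𝔞.radical = 𝔞)
    (hmin : ∀ 𝔭 ∈ 𝔞.minimalPrimes,
      ((Ideal.map (algebraMap R S) 𝔭).radical : Set S) = { s : S | ∀ x : S, T (s * x) ∈ 𝔭 })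
    (e : ℕ) (he : 1 ≤ e) (φ : R →+ R) (hφ : IsCartierMap p R e φ)
    (ψ : S →+ S) (hψ : IsCartierMap p S e ψ) (hψt : IsTranspose p T e φ ψ)
    (hstab : ∀ a ∈ 𝔞, φ a ∈ 𝔞) :
    ∀ s ∈ (Ideal.map (algebraMap R S) 𝔞).radical,
      ψ s ∈ (Ideal.map (algebraMap R S) 𝔞).radical := by
  have hpe : 0 < p ^ e := Nat.pow_pos hp.pos
  intro s hs
  rw [Ideal.radical_eq_sInf]
  refine Ideal.mem_sInf.mpr fun {Q} hQ => ?_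
  obtain ⟨hQle, hQpr⟩ := hQ
  -- contract Q to R and pick a minimal prime of 𝔞 below
  set q : Ideal R := Q.comap (algebraMap R S) with hq
  have hqpr : q.IsPrime := Ideal.IsPrime.comap _
  have h𝔞q : 𝔞 ≤ q := Ideal.map_le_iff_le_comap.mp hQle
  obtain ⟨𝔭, h𝔭, h𝔭q⟩ := Ideal.exists_minimalPrimes_le h𝔞q
  have h𝔭pr : 𝔭.IsPrime := h𝔭.1.1
  -- s is in √(𝔭S)
  have hs𝔭 : s ∈ (Ideal.map (algebraMap R S) 𝔭).radical :=
    Ideal.radical_mono (Ideal.map_mono h𝔭.1.2) hs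
  have hsT : ∀ x : S, T (s * x) ∈ 𝔭 := by
    have := (Set.ext_iff.mp (hmin 𝔭 h𝔭) s).mp hs𝔭
    exact this
  -- hence ψ s is in √(𝔭S)
  have hψs : ψ s ∈ (Ideal.map (algebraMap R S) 𝔭).radical := by
    refine (Set.ext_iff.mp (hmin 𝔭 h𝔭) (ψ s)).mpr fun x => ?_
    rw [hψt s x]
    exact cartier_stab_minimalPrime p 𝔞 h𝔞rad e φ hpe hφ hstab 𝔭 h𝔭 _ (hsT _)
  -- and √(𝔭S) ≤ Q
  have hle : (Ideal.map (algebraMap R S) 𝔭).radical ≤ Q := by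
    have h1 : Ideal.map (algebraMap R S) 𝔭 ≤ Q :=
      Ideal.map_le_iff_le_comap.mpr h𝔭q
    calc (Ideal.map (algebraMap R S) 𝔭).radical ≤ Q.radical := Ideal.radical_mono h1
      _ = Q := hQpr.radical
  exact hle hψs
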